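/- The iterated-sums signature is invariant to insertion of zeros: let x be a d-dimensional real time series of length T, let 1 ≤ t_0 ≤ T+1, and let y be the time series of length T+1 defined by y_i = x_i for i < t_0, y_{t_0} = 0 ∈ ℝ^d, and y_i = x_{i−1} for i > t_0. Then for every word w (all of whose letters have at least one nonzero entry), ⟨w, ISS_{0,T}(x)⟩ = ⟨w, ISS_{0,T+1}(y)⟩. -/

import Mathlib

/-- The monomial `x_t^{[a]} = ∏_j (x_t^{(j)})^{a_j}`. -/
def mono {d : ℕ} (x : ℕ → Fin d → ℝ) (t : ℕ) (a : Fin d → ℕ) : ℝ :=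
  ∏ j, (x t j) ^ (a j)

/-- The iterated-sums signature coefficient
`⟨[a_1]⋯[a_p], ISS_{s,t}(x)⟩ = ∑_{s < t_1 < ⋯ < t_p ≤ t} x_{t_1}^{[a_1]} ⋯ x_{t_p}^{[a_p]}`. -/
def iss {d : ℕ} (x : ℕ → Fin d → ℝ) : List (Fin d → ℕ) → ℕ → ℕ → ℝ
  | [], _, _ => 1
  | a :: w, s, t => ∑ i ∈ Finset.Ioc s t, mono x i a * iss x w i t

lemma mono_eq_zero {d : ℕ} (y : ℕ → Fin d → ℝ) (t : ℕ) (h : y t = 0)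
    (a : Fin d → ℕ) (ha : ∃ j, a j ≠ 0) : mono y t a = 0 := by
  obtain ⟨j, hj⟩ := ha
  apply Finset.prod_eq_zero (Finset.mem_univ j)
  rw [h]
  simp [zero_pow hj]

lemma iss_key {d T : ℕ} (x y : ℕ → Fin d → ℝ) (t₀ : ℕ)
    (ht₀1 : 1 ≤ t₀) (ht₀2 : t₀ ≤ T + 1)
    (hy_lt : ∀ i, i < t₀ → y i = x i)
    (hy_eq : y t₀ = 0)
    (hy_gt : ∀ i, t₀ < i → y i = x (i - 1))
    (w : List (Fin d → ℕ)) (hletters : ∀ a ∈ w, ∃ j, a j ≠ 0) :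
    ∀ s, (s < t₀ → iss x w s T = iss y w s (T + 1)) ∧
         (t₀ ≤ s → iss x w s T = iss y w (s + 1) (T + 1)) := by
  induction w with
  | nil => exact fun s => ⟨fun _ => rfl, fun _ => rfl⟩
  | cons a w ih =>
    have ha : ∃ j, a j ≠ 0 := hletters a List.mem_cons_self
    have ih' := ih (fun b hb => hletters b (List.mem_cons_of_mem a hb))
    have shift : ∀ s, t₀ - 1 ≤ s →
        (∑ i ∈ Finset.Ioc s T, mono x i a * iss x w i T)
        = ∑ i ∈ Finset.Ioc (s + 1) (T + 1), mono y i a * iss y w i (T + 1) := by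
      intro s hs
      refine Finset.sum_nbij' (fun i => i + 1) (fun i => i - 1) ?_ ?_ ?_ ?_ ?_
      · intro i hi
        simp only [Finset.mem_Ioc] at hi ⊢; omega
      · intro i hi
        simp only [Finset.mem_Ioc] at hi ⊢; omega
      · intro i _; show i + 1 - 1 = i; omega
      · intro i hi
        simp only [Finset.mem_Ioc] at hi
        show i - 1 + 1 = i; omega
      · intro i hi
        simp only [Finset.mem_Ioc] at hi
        have hgt : t₀ < i + 1 := by omega
        have hm : y (i + 1) = x i := by rw [hy_gt _ hgt]; simp
        have hiss : iss x w i T = iss y w (i + 1) (T + 1) := (ih' i).2 (by omega)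
        rw [hiss]
        unfold mono
        rw [hm]
    intro s
    constructor
    · intro hs
      have h1 : s ≤ t₀ - 1 := by omega
      have h2 : t₀ - 1 ≤ T := by omega
      show (∑ i ∈ Finset.Ioc s T, mono x i a * iss x w i T)
          = ∑ i ∈ Finset.Ioc s (T + 1), mono y i a * iss y w i (T + 1)
      rw [← Finset.sum_Ioc_consecutive (fun i => mono x i a * iss x w i T) h1 h2,
          ← Finset.sum_Ioc_consecutive (fun i => mono y i a * iss y w i (T + 1)) h1
            (show t₀ - 1 ≤ T + 1 by omega),
          ← Finset.sum_Ioc_consecutive (fun i => mono y i a * iss y w i (T + 1))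
            (show t₀ - 1 ≤ t₀ by omega) (show t₀ ≤ T + 1 by omega)]
      have hIoc : Finset.Ioc (t₀ - 1) t₀ = {t₀} := by
        ext i; simp only [Finset.mem_Ioc, Finset.mem_singleton]; omega
      rw [hIoc, Finset.sum_singleton, mono_eq_zero y t₀ hy_eq a ha, zero_mul, zero_add]
      congr 1
      · apply Finset.sum_congr rfl
        intro i hi
        simp only [Finset.mem_Ioc] at hi
        have hlt : i < t₀ := by omega
        rw [(ih' i).1 hlt]
        unfold mono
        rw [hy_lt i hlt]
      · have := shift (t₀ - 1) le_rfl
        rwa [show t₀ - 1 + 1 = t₀ by omega] at this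
    · intro hs
      exact shift s (by omega)

/-- Invariance of the iterated-sums signature to insertion of zeros: if `y` of length
`T+1` is obtained from `x` of length `T` by inserting the value `0 ∈ ℝ^d` at position
`t_0` (`1 ≤ t_0 ≤ T+1`), then `⟨w, ISS_{0,T}(x)⟩ = ⟨w, ISS_{0,T+1}(y)⟩` for every word
`w` all of whose letters have at least one nonzero entry. -/
theorem iss_invariant_zero_insertion {d T : ℕ} (x y : ℕ → Fin d → ℝ) (t₀ : ℕ)
    (ht₀1 : 1 ≤ t₀) (ht₀2 : t₀ ≤ T + 1)
    (hy_lt : ∀ i, i < t₀ → y i = x i)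
    (hy_eq : y t₀ = 0)
    (hy_gt : ∀ i, t₀ < i → y i = x (i - 1))
    (w : List (Fin d → ℕ)) (hletters : ∀ a ∈ w, ∃ j, a j ≠ 0) :
    iss x w 0 T = iss y w 0 (T + 1) := by
  exact (iss_key x y t₀ ht₀1 ht₀2 hy_lt hy_eq hy_gt w hletters 0).1 ht₀1
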